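/- Let 0 < α < 1/2 < β < 1, let f : {s ∈ ℂ : α < Re(s) < β} → ℂ be holomorphic with |f(s)| ≤ C|s|^m for some C > 0 and m ∈ ℕ, and fix α < c₋ < 1/2 < c₊ < β. Define ρ̄_±(t) = -(2πi)^{-1} ∫_{c_± - i∞}^{c_± + i∞} s^{-m-2} tan(πs) f(s) t^{-s} ds for t > 0. Then ρ̄_+(t) = (2^{m+2}/π)·f(1/2)·t^{-1/2} + ρ̄_-(t) for all t > 0. -/

import Mathlib

open MeasureTheory
open Complex Real

/-- The vertical-line integral `-(2πi)⁻¹ ∫_{c-i∞}^{c+i∞} s^{-m-2} tan(πs) f(s) t^{-s} ds`,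
parametrized as `s = c + iy`, `ds = i dy`. -/
noncomputable def verticalRho (f : ℂ → ℂ) (m : ℕ) (c t : ℝ) : ℂ :=
  -(2 * (Real.pi : ℂ) * Complex.I)⁻¹ *
    (Complex.I * ∫ y : ℝ,
      ((c : ℂ) + y * Complex.I) ^ (-(m : ℂ) - 2)
        * Complex.tan ((Real.pi : ℂ) * ((c : ℂ) + y * Complex.I))
        * f ((c : ℂ) + y * Complex.I)
        * (t : ℂ) ^ (-((c : ℂ) + y * Complex.I)))

lemma tan_bound (s : ℂ) (hs : 1 ≤ |s.im|) : ‖Complex.tan ((Real.pi:ℂ) * s)‖ ≤ 3 := by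
  set z : ℂ := (Real.pi:ℂ) * s with hz
  set a : ℂ := Complex.exp (z * Complex.I) with ha
  set b : ℂ := Complex.exp (-z * Complex.I) with hb
  have hA : ‖a‖ = Real.exp (-(Real.pi * s.im)) := by
    rw [ha, Complex.norm_exp]; congr 1; simp [hz]
  have hB : ‖b‖ = Real.exp (Real.pi * s.im) := by
    rw [hb, Complex.norm_exp]; congr 1; simp [hz]
  have hab : ‖a‖ * ‖b‖ = 1 := by
    rw [hA, hB, ← Real.exp_add]; simp
  have habs : ‖Complex.tan z‖
      = ‖b - a‖ / 2 / (‖a + b‖ / 2) := by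
    show ‖Complex.sin z / Complex.cos z‖ = _
    rw [norm_div]
    congr 1
    · show ‖(b - a) * Complex.I / 2‖ = _
      rw [norm_div, norm_mul]; simp
    · show ‖(a + b) / 2‖ = _
      rw [norm_div]; simp
  have hpi : (2:ℝ) ≤ Real.exp (Real.pi * |s.im|) := by
    have h1 : (1:ℝ) ≤ Real.pi * |s.im| := by nlinarith [Real.pi_gt_three]
    have := Real.add_one_le_exp (Real.pi * |s.im|); linarith
  set x : ℝ := ‖a‖ with hx
  set y : ℝ := ‖b‖ with hy
  have hmax : 2 ≤ x ∨ 2 ≤ y := by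
    rcases le_total 0 s.im with h | h
    · right; rw [hB]; rwa [_root_.abs_of_nonneg h] at hpi
    · left; rw [hA]; rw [_root_.abs_of_nonpos h] at hpi; convert hpi using 2; ring
  have hN : ‖b - a‖ ≤ x + y := by
    have := norm_add_le b (-a)
    simp only [norm_neg] at this
    rw [← sub_eq_add_neg] at this; rw [hx, hy]; linarith
  have hD1 : x - y ≤ ‖a + b‖ := by
    have := norm_add_le (a + b) (-b); simp at this; linarith
  have hD2 : y - x ≤ ‖a + b‖ := by
    have := norm_add_le (a + b) (-a); simp at this
    rw [add_comm] at this; linarith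
  have hx0 : 0 < x := norm_pos_iff.mpr (Complex.exp_ne_zero _)
  have hy0 : 0 < y := norm_pos_iff.mpr (Complex.exp_ne_zero _)
  rw [habs]
  rcases hmax with h2 | h2
  · have hyx : y = x⁻¹ := by field_simp; linarith [hab]
    have hy4 : y ≤ x/4 := by rw [hyx, inv_le_iff_one_le_mul₀ hx0]; nlinarith
    have hD : 3/2 ≤ ‖a + b‖ := by linarith
    rw [div_le_iff₀ (by linarith)]
    have : ‖b - a‖ ≤ 3 * ‖a+b‖ := by nlinarith
    linarith
  · have hyx : x = y⁻¹ := by field_simp; linarith [hab]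
    have hy4 : x ≤ y/4 := by rw [hyx, inv_le_iff_one_le_mul₀ hy0]; nlinarith
    have hD : 3/2 ≤ ‖a + b‖ := by linarith
    rw [div_le_iff₀ (by linarith)]
    have : ‖b - a‖ ≤ 3 * ‖a+b‖ := by nlinarith
    linarith


noncomputable abbrev polef : ℂ → ℂ := fun s => (s - 1/2)⁻¹

lemma horiz_ftc (cLo cHi T : ℝ) (hT : T ≠ 0) :
    (∫ x : ℝ in cLo..cHi, ((x:ℂ) + T * I - 1/2)⁻¹)
      = Complex.log ((cHi:ℂ) + T*I - 1/2) - Complex.log ((cLo:ℂ) + T*I - 1/2) := by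
  apply intervalIntegral.integral_eq_sub_of_hasDerivAt
  · intro x _
    have h1 : HasDerivAt (fun w : ℂ => Complex.log (w + T*I - 1/2))
        ((↑x + T*I - 1/2)⁻¹) (x:ℂ) := by
      have hslit : ((x:ℂ) + T*I - 1/2) ∈ Complex.slitPlane := by
        apply Or.inr; simp [Complex.add_im, Complex.sub_im, Complex.mul_im, hT]
      have := (Complex.hasDerivAt_log hslit).comp (x:ℂ)
        (((hasDerivAt_id ((x:ℂ))).add_const (T*I)).sub_const (1/2))
      exact this.congr_deriv (mul_one _)
    simpa using h1.comp_ofReal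
  · apply Continuous.intervalIntegrable
    apply Continuous.inv₀
    · continuity
    · intro x
      intro h
      have := congrArg Complex.im h
      simp [hT] at this
lemma vert_ftc_pos (c T : ℝ) (hc : (1:ℝ)/2 < c) :
    (∫ y : ℝ in (-T)..T, ((c:ℂ) + y * I - 1/2)⁻¹)
      = (-I) * Complex.log ((c:ℂ) + T*I - 1/2) - (-I) * Complex.log ((c:ℂ) + ((-T:ℝ):ℂ)*I - 1/2) := by
  apply intervalIntegral.integral_eq_sub_of_hasDerivAt
  · intro y _
    have h1 : HasDerivAt (fun w : ℂ => (-I) * Complex.log ((c:ℂ) + w*I - 1/2))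
        (((c:ℂ) + y*I - 1/2)⁻¹) (y:ℂ) := by
      have hslit : ((c:ℂ) + y*I - 1/2) ∈ Complex.slitPlane := by
        apply Or.inl
        simp only [Complex.sub_re, Complex.add_re, Complex.mul_re, Complex.ofReal_re,
          Complex.I_re, Complex.I_im, Complex.ofReal_im]
        norm_num; linarith
      have hinner : HasDerivAt (fun w : ℂ => (c:ℂ) + w*I - 1/2) I (y:ℂ) := by
        simpa using ((((hasDerivAt_id ((y:ℂ))).mul_const I).const_add (c:ℂ)).sub_const (1/2))
      have := ((Complex.hasDerivAt_log hslit).comp (y:ℂ) hinner).const_mul (-I)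
      refine this.congr_deriv ?_
      have hIne : ((c:ℂ) + y*I - 1/2) ≠ 0 := Complex.slitPlane_ne_zero hslit
      rw [show (-I * ((↑c + ↑y * I - 1/2)⁻¹ * I) : ℂ) = (-(I*I)) * (↑c + ↑y * I - 1/2)⁻¹ by ring, Complex.I_mul_I]
      ring
    simpa using h1.comp_ofReal
  · apply Continuous.intervalIntegrable
    apply Continuous.inv₀
    · continuity
    · intro y h
      have := congrArg Complex.re h
      simp [Complex.sub_re, Complex.add_re, Complex.mul_re] at this
      norm_num at this
      linarith

lemma vert_ftc_neg (c T : ℝ) (hc : c < 1/2) :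
    (∫ y : ℝ in (-T)..T, ((c:ℂ) + y * I - 1/2)⁻¹)
      = (-I) * Complex.log (-((c:ℂ) + T*I - 1/2)) - (-I) * Complex.log (-((c:ℂ) + ((-T:ℝ):ℂ)*I - 1/2)) := by
  apply intervalIntegral.integral_eq_sub_of_hasDerivAt
  · intro y _
    have h1 : HasDerivAt (fun w : ℂ => (-I) * Complex.log (-((c:ℂ) + w*I - 1/2)))
        (((c:ℂ) + y*I - 1/2)⁻¹) (y:ℂ) := by
      have hslit : (-((c:ℂ) + y*I - 1/2)) ∈ Complex.slitPlane := by
        apply Or.inl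
        simp only [Complex.neg_re, Complex.sub_re, Complex.add_re, Complex.mul_re,
          Complex.ofReal_re, Complex.I_re, Complex.I_im, Complex.ofReal_im]
        norm_num; linarith
      have hinner : HasDerivAt (fun w : ℂ => -((c:ℂ) + w*I - 1/2)) (-I) (y:ℂ) := by
        exact ((((hasDerivAt_id ((y:ℂ))).mul_const I).const_add (c:ℂ)).sub_const (1/2)).neg.congr_deriv (by simp)
      have := ((Complex.hasDerivAt_log hslit).comp (y:ℂ) hinner).const_mul (-I)
      refine this.congr_deriv ?_
      rw [show (-I * ((-((c:ℂ) + ↑y * I - 1/2))⁻¹ * -I) : ℂ) = (I*I) * (-(((c:ℂ) + ↑y * I - 1/2)))⁻¹ by ring,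
        Complex.I_mul_I, inv_neg]
      ring
    simpa using h1.comp_ofReal
  · apply Continuous.intervalIntegrable
    apply Continuous.inv₀
    · continuity
    · intro y h
      have := congrArg Complex.re h
      simp [Complex.sub_re, Complex.add_re, Complex.mul_re] at this
      norm_num at this
      linarith

lemma log_neg_of_im_pos {w : ℂ} (h : 0 < w.im) : Complex.log (-w) = Complex.log w - Real.pi * I := by
  have h0 : w ≠ 0 := by intro h0; rw [h0] at h; simp at h
  rw [Complex.log, Complex.log, norm_neg, Complex.arg_neg_eq_arg_sub_pi_of_im_pos h]
  push_cast
  ring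

lemma log_neg_of_im_neg {w : ℂ} (h : w.im < 0) : Complex.log (-w) = Complex.log w + Real.pi * I := by
  rw [Complex.log, Complex.log, norm_neg, Complex.arg_neg_eq_arg_add_pi_of_im_neg h]
  push_cast
  ring

lemma pole_rect (cLo cHi T : ℝ) (h2 : cLo < 1/2) (h3 : 1/2 < cHi) (hT : 0 < T) :
    ((∫ x : ℝ in cLo..cHi, ((x:ℂ) + ((-T:ℝ):ℂ) * I - 1/2)⁻¹) -
      ∫ x : ℝ in cLo..cHi, ((x:ℂ) + (T:ℝ) * I - 1/2)⁻¹) +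
      I • (∫ y : ℝ in (-T)..T, ((cHi:ℂ) + y * I - 1/2)⁻¹) -
      I • (∫ y : ℝ in (-T)..T, ((cLo:ℂ) + y * I - 1/2)⁻¹) = 2 * Real.pi * I := by
  have hTne : (-T : ℝ) ≠ 0 := by linarith
  have hTne' : (T : ℝ) ≠ 0 := by linarith
  rw [horiz_ftc cLo cHi (-T) hTne, horiz_ftc cLo cHi T hTne',
    vert_ftc_pos cHi T h3, vert_ftc_neg cLo T h2]
  have him1 : (0:ℝ) < ((cLo:ℂ) + (T:ℝ)*I - 1/2).im := by
    simp [Complex.add_im, Complex.sub_im, Complex.mul_im]; exact hT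
  have him2 : ((cLo:ℂ) + ((-T:ℝ):ℂ)*I - 1/2).im < 0 := by
    simp [Complex.add_im, Complex.sub_im, Complex.mul_im]; exact hT
  rw [log_neg_of_im_pos him1, log_neg_of_im_neg him2]
  simp only [smul_eq_mul]
  push_cast
  ring_nf
  rw [show (I:ℂ)^3 = I^2 * I by ring, Complex.I_sq]
  ring


lemma cos_pi_ne (s : ℂ) (h0 : 0 < s.re) (h1 : s.re < 1) (hs : s ≠ 1/2) :
    Complex.cos ((Real.pi:ℂ) * s) ≠ 0 := by
  intro h
  rw [Complex.cos_eq_zero_iff] at h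
  obtain ⟨k, hk⟩ := h
  have hπ : (Real.pi : ℂ) ≠ 0 := by
    exact_mod_cast Real.pi_ne_zero
  have hs2 : s = (2*k+1)/2 := by
    field_simp at hk ⊢
    rw [mul_comm] at hk
    linear_combination hk
  have hre : s.re = (2*(k:ℝ)+1)/2 := by
    rw [hs2]; push_cast; simp [Complex.div_re]
  rw [hre] at h0 h1
  have hr1 : ((-1:ℤ):ℝ) < k := by push_cast; linarith
  have hr2 : ((k:ℤ):ℝ) < ((1:ℤ):ℝ) := by push_cast; linarith
  have i1 : (-1:ℤ) < k := by exact_mod_cast hr1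
  have i2 : k < 1 := by exact_mod_cast hr2
  have hk0 : k = 0 := by omega
  apply hs
  rw [hs2, hk0]
  norm_num

noncomputable def psiC : ℂ → ℂ := dslope (fun s => Complex.cos ((Real.pi:ℂ)*s)) (1/2)

lemma psiC_diff : Differentiable ℂ psiC := by
  rw [← differentiableOn_univ]
  exact (Complex.differentiableOn_dslope (Filter.univ_mem)).mpr
    (((differentiable_const _).mul differentiable_id).ccos.differentiableOn)

lemma cos_pi_half : Complex.cos ((Real.pi:ℂ) * (1/2)) = 0 := by
  rw [show ((Real.pi:ℂ) * (1/2)) = ((Real.pi/2 : ℝ) : ℂ) by push_cast; ring,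
    ← Complex.ofReal_cos, Real.cos_pi_div_two]
  simp

lemma sin_pi_half : Complex.sin ((Real.pi:ℂ) * (1/2)) = 1 := by
  rw [show ((Real.pi:ℂ) * (1/2)) = ((Real.pi/2 : ℝ) : ℂ) by push_cast; ring,
    ← Complex.ofReal_sin, Real.sin_pi_div_two]
  simp

lemma psiC_val : psiC (1/2) = -(Real.pi:ℂ) := by
  rw [psiC, dslope_same]
  have h : HasDerivAt (fun s : ℂ => Complex.cos ((Real.pi:ℂ)*s))
      (-Complex.sin ((Real.pi:ℂ)*(1/2)) * (Real.pi:ℂ)) (1/2) := by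
    have hid : HasDerivAt (fun s : ℂ => (Real.pi:ℂ) * s) ((Real.pi:ℂ)) (1/2 : ℂ) := by
      simpa using (hasDerivAt_id ((1:ℂ)/2)).const_mul ((Real.pi:ℂ))
    exact (Complex.hasDerivAt_cos ((Real.pi:ℂ)*(1/2))).comp _ hid
  rw [h.deriv, sin_pi_half]
  ring

lemma psiC_factor {s : ℂ} (hs : s ≠ 1/2) :
    Complex.cos ((Real.pi:ℂ) * s) = psiC s * (s - 1/2) := by
  rw [psiC, dslope_of_ne _ hs, slope, cos_pi_half, vsub_eq_sub, sub_zero, smul_eq_mul]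
  have h : s - 1/2 ≠ 0 := sub_ne_zero.mpr hs
  rw [mul_right_comm, inv_mul_cancel₀ h, one_mul]

lemma psiC_ne {s : ℂ} (h0 : 0 < s.re) (h1 : s.re < 1) : psiC s ≠ 0 := by
  rcases eq_or_ne s (1/2) with h | h
  · rw [h, psiC_val]
    exact_mod_cast neg_ne_zero.mpr (by exact_mod_cast Real.pi_ne_zero)
  · intro hz
    apply cos_pi_ne s h0 h1 h
    rw [psiC_factor h, hz, zero_mul]

noncomputable def Gfun (f : ℂ → ℂ) (m : ℕ) (t : ℝ) : ℂ → ℂ := fun s =>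
  s ^ (-((m:ℤ)+2)) * Complex.tan ((Real.pi:ℂ) * s) * f s * Complex.exp (Complex.log t * (-s))

lemma Gfun_eq (f : ℂ → ℂ) (m : ℕ) (t : ℝ) (ht : 0 < t) (s : ℂ) :
    s ^ (-(m:ℂ) - 2) * Complex.tan ((Real.pi:ℂ) * s) * f s * (t:ℂ) ^ (-s) = Gfun f m t s := by
  rw [Gfun]
  congr 1
  · congr 2
    rw [show (-(m:ℂ) - 2) = ((-((m:ℤ)+2) : ℤ) : ℂ) by push_cast; ring, Complex.cpow_intCast]
  · rw [Complex.cpow_def_of_ne_zero (by exact_mod_cast ht.ne' : (t:ℂ) ≠ 0)]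

lemma Gfun_diffAt {f : ℂ → ℂ} {m : ℕ} {t : ℝ} {s : ℂ} (h0 : 0 < s.re) (h1 : s.re < 1)
    (hs : s ≠ 1/2) (hfd : DifferentiableAt ℂ f s) : DifferentiableAt ℂ (Gfun f m t) s := by
  have hs0 : s ≠ 0 := by
    intro h; rw [h] at h0; simp at h0
  apply DifferentiableAt.mul
  apply DifferentiableAt.mul
  apply DifferentiableAt.mul
  · exact differentiableAt_zpow.mpr (Or.inl hs0)
  · have hcos := cos_pi_ne s h0 h1 hs
    exact (Complex.differentiableAt_tan.mpr hcos).comp s (differentiableAt_id.const_mul _)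
  · exact hfd
  · exact ((differentiableAt_id.neg).const_mul (Complex.log t)).cexp

lemma rpow_exp_bound {t : ℝ} (ht : 0 < t) {a b x : ℝ} (h1 : a ≤ x) (h2 : x ≤ b) :
    t ^ (-x) ≤ t ^ (-a) + t ^ (-b) := by
  rcases le_total 1 t with h | h
  · have := Real.rpow_le_rpow_of_exponent_le h (neg_le_neg h1)
    have h0 : (0:ℝ) ≤ t ^ (-b) := Real.rpow_nonneg ht.le _
    linarith
  · have := Real.rpow_le_rpow_of_exponent_ge ht h (neg_le_neg h2)
    have h0 : (0:ℝ) ≤ t ^ (-a) := Real.rpow_nonneg ht.le _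
    linarith

lemma Gfun_bound {a b C : ℝ} {f : ℂ → ℂ} {m : ℕ} {t : ℝ} (ht : 0 < t) (hC : 0 ≤ C)
    (hbound : ∀ s : ℂ, a < s.re → s.re < b → ‖f s‖ ≤ C * ‖s‖ ^ m)
    {s : ℂ} (ha0 : 0 < a) (hs1 : a < s.re) (hs2 : s.re < b) (him : 1 ≤ |s.im|) :
    ‖Gfun f m t s‖ ≤ 3 * C * (t ^ (-a) + t ^ (-b)) / s.im ^ 2 := by
  set A := ‖s‖ with hA
  have hs0 : s ≠ 0 := by
    intro h; rw [h] at hs1; simp at hs1; linarith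
  have hA0 : 0 < A := norm_pos_iff.mpr hs0
  have him2 : s.im ^ 2 ≤ A ^ 2 := by
    rw [← _root_.sq_abs]
    exact pow_le_pow_left₀ (abs_nonneg _) (Complex.abs_im_le_norm s) 2
  have himne : s.im ≠ 0 := by
    intro h; rw [h] at him; simp at him; linarith
  have him0 : (0:ℝ) < s.im ^ 2 := by positivity
  have habs : ‖Gfun f m t s‖
      = (A ^ (m+2))⁻¹ * ‖Complex.tan ((Real.pi:ℂ) * s)‖ * ‖f s‖
        * t ^ (-s.re) := by
    rw [Gfun]
    rw [norm_mul, norm_mul, norm_mul]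
    congr 1
    · congr 2
      rw [norm_zpow]
      rw [zpow_neg, ← hA]
      norm_cast
    · rw [Complex.norm_exp, ← Complex.ofReal_log ht.le]
      rw [show ((Real.log t : ℝ) : ℂ) * (-s) = ((Real.log t : ℝ) : ℂ) * (-s) by rfl]
      rw [Real.rpow_def_of_pos ht]
      congr 1
      simp [Complex.mul_re]
  rw [habs]
  set K := t ^ (-a) + t ^ (-b) with hK
  have hK0 : 0 < K := by
    have := Real.rpow_pos_of_pos ht (-a)
    have := Real.rpow_pos_of_pos ht (-b)
    rw [hK]; linarith
  have htan := tan_bound s him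
  have hfb := hbound s hs1 hs2
  have hrp : t ^ (-s.re) ≤ K := rpow_exp_bound ht hs1.le hs2.le
  calc (A ^ (m+2))⁻¹ * ‖Complex.tan ((Real.pi:ℂ) * s)‖ * ‖f s‖ * t ^ (-s.re)
      ≤ (A ^ (m+2))⁻¹ * 3 * (C * A ^ m) * K := by
        gcongr <;> first
          | exact inv_nonneg.mpr (pow_nonneg hA0.le _)
          | exact htan
          | exact hfb
          | exact hrp
          | positivity
    _ = 3 * C * K * (A^2)⁻¹ := by
        rw [pow_add, mul_inv]
        field_simp
    _ ≤ 3 * C * K * (s.im^2)⁻¹ := by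
        gcongr <;> first
          | exact him0
          | exact him2
          | positivity
    _ = 3 * C * K / s.im ^ 2 := by rw [div_eq_mul_inv]

lemma strip_open (a b : ℝ) : IsOpen {s : ℂ | a < s.re ∧ s.re < b} := by
  have : {s : ℂ | a < s.re ∧ s.re < b} = Complex.re ⁻¹' (Set.Ioo a b) := by
    ext s; simp [Set.mem_Ioo]
  rw [this]
  exact isOpen_Ioo.preimage Complex.continuous_re

lemma line_re (c y : ℝ) : ((c:ℂ) + y * Complex.I).re = c := by simp

lemma line_im (c y : ℝ) : ((c:ℂ) + y * Complex.I).im = y := by simp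

lemma line_ne_half {c : ℝ} (hc : c ≠ 1/2) (y : ℝ) : ((c:ℂ) + y * Complex.I) ≠ 1/2 := by
  intro h
  apply hc
  have := congrArg Complex.re h
  rw [line_re] at this
  rw [this]
  norm_num

lemma Gfun_cont_line {a b C : ℝ} {f : ℂ → ℂ} {m : ℕ} {t : ℝ} (ha0 : 0 < a) (hb1 : b < 1)
    (hf : DifferentiableOn ℂ f {s : ℂ | a < s.re ∧ s.re < b})
    {c : ℝ} (hc1 : a < c) (hc2 : c < b) (hc3 : c ≠ 1/2) :
    Continuous (fun y : ℝ => Gfun f m t ((c:ℂ) + y * Complex.I)) := by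
  rw [continuous_iff_continuousAt]
  intro y
  have hline : Continuous (fun y : ℝ => (c:ℂ) + y * Complex.I) := by continuity
  have hd : DifferentiableAt ℂ (Gfun f m t) ((c:ℂ) + y * Complex.I) := by
    apply Gfun_diffAt
    · rw [line_re]; linarith
    · rw [line_re]; linarith
    · exact line_ne_half hc3 y
    · exact hf.differentiableAt ((strip_open a b).mem_nhds (by
        simp only [Set.mem_setOf_eq, line_re]; exact ⟨hc1, hc2⟩))
  exact ContinuousAt.comp (g := Gfun f m t) hd.continuousAt hline.continuousAt

lemma Gfun_integrable {a b C : ℝ} {f : ℂ → ℂ} {m : ℕ} {t : ℝ} (ht : 0 < t) (ha0 : 0 < a)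
    (hb1 : b < 1)
    (hf : DifferentiableOn ℂ f {s : ℂ | a < s.re ∧ s.re < b}) (hC : 0 ≤ C)
    (hbound : ∀ s : ℂ, a < s.re → s.re < b → ‖f s‖ ≤ C * ‖s‖ ^ m)
    {c : ℝ} (hc1 : a < c) (hc2 : c < b) (hc3 : c ≠ 1/2) :
    MeasureTheory.Integrable (fun y : ℝ => Gfun f m t ((c:ℂ) + y * Complex.I)) := by
  have hcont := Gfun_cont_line (a := a) (b := b) (C := C) (m := m) (t := t)
    ha0 hb1 hf hc1 hc2 hc3
  obtain ⟨M, hM⟩ := isCompact_Icc.exists_bound_of_continuousOn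
    (f := fun y : ℝ => Gfun f m t ((c:ℂ) + y * Complex.I)) hcont.continuousOn
  set K := 3 * C * (t ^ (-a) + t ^ (-b)) with hKdef
  have hK0 : 0 ≤ K := by
    have := Real.rpow_pos_of_pos ht (-a)
    have := Real.rpow_pos_of_pos ht (-b)
    rw [hKdef]; positivity
  set K' := max (2*K) (2 * max M 0) with hK'def
  have hK'0 : 0 ≤ K' := le_trans (by positivity) (le_max_right _ _)
  apply MeasureTheory.Integrable.mono' (integrable_inv_one_add_sq.const_mul K')
    hcont.aestronglyMeasurable
  apply MeasureTheory.ae_of_all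
  intro y
  have h3 : (0:ℝ) < 1 + y^2 := by positivity
  rcases le_total (|y|) 1 with hy | hy
  · have h1 : ‖Gfun f m t ((c:ℂ) + y * Complex.I)‖ ≤ max M 0 :=
      le_trans (hM y (abs_le.mp hy)) (le_max_left _ _)
    have h2 : (1:ℝ) + y^2 ≤ 2 := by nlinarith [_root_.sq_abs y, abs_nonneg y]
    have hmm : (0:ℝ) ≤ max M 0 := le_max_right _ _
    have h4 : max M 0 * (1 + y^2) ≤ K' := by
      have h5 : max M 0 * 2 ≤ K' := by
        rw [hK'def, mul_comm]; exact le_max_right _ _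
      nlinarith
    calc ‖Gfun f m t ((c:ℂ) + y * Complex.I)‖ ≤ max M 0 := h1
      _ ≤ K' * (1+y^2)⁻¹ := by
          rw [← div_eq_mul_inv, le_div_iff₀ h3]; linarith
  · have him : 1 ≤ |((c:ℂ) + y*Complex.I).im| := by rw [line_im]; exact hy
    have hb := Gfun_bound ht hC hbound ha0
      (show a < ((c:ℂ)+y*Complex.I).re by rw [line_re]; exact hc1)
      (show ((c:ℂ)+y*Complex.I).re < b by rw [line_re]; exact hc2) him
    rw [line_im] at hb
    have hyy : (1:ℝ) ≤ y^2 := by nlinarith [_root_.sq_abs y, abs_nonneg y]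
    calc ‖Gfun f m t ((c:ℂ) + y * Complex.I)‖
        = ‖Gfun f m t ((c:ℂ) + y * Complex.I)‖ := rfl
      _ ≤ K / y^2 := hb
      _ ≤ K' * (1+y^2)⁻¹ := by
          rw [← div_eq_mul_inv, div_le_div_iff₀ (by positivity) h3]
          have h7 : 2*K ≤ K' := le_max_left _ _
          nlinarith

noncomputable def PhiF (f : ℂ → ℂ) (m : ℕ) (t : ℝ) : ℂ → ℂ := fun s =>
  s ^ (-((m:ℤ)+2)) * (Complex.sin ((Real.pi:ℂ)*s) / psiC s) * f s
    * Complex.exp (Complex.log t * (-s))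

lemma PhiF_diffAt {f : ℂ → ℂ} {m : ℕ} {t : ℝ} {s : ℂ} (h0 : 0 < s.re) (h1 : s.re < 1)
    (hfd : DifferentiableAt ℂ f s) : DifferentiableAt ℂ (PhiF f m t) s := by
  have hs0 : s ≠ 0 := by intro h; rw [h] at h0; simp at h0
  apply DifferentiableAt.mul
  apply DifferentiableAt.mul
  apply DifferentiableAt.mul
  · exact differentiableAt_zpow.mpr (Or.inl hs0)
  · apply DifferentiableAt.div
    · exact (Complex.differentiable_sin.comp
        (differentiable_id.const_mul _)).differentiableAt
    · exact psiC_diff.differentiableAt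
    · exact psiC_ne h0 h1
  · exact hfd
  · exact ((differentiableAt_id.neg).const_mul (Complex.log t)).cexp

lemma Gfun_decomp {f : ℂ → ℂ} {m : ℕ} {t : ℝ} {s : ℂ} (h0 : 0 < s.re) (h1 : s.re < 1)
    (hs : s ≠ 1/2) :
    Gfun f m t s = dslope (PhiF f m t) (1/2) s
      + PhiF f m t (1/2) * (s - 1/2)⁻¹ := by
  rw [dslope_of_ne _ hs, slope, smul_eq_mul, vsub_eq_sub]
  have hψ := psiC_ne h0 h1
  have hsub : s - 1/2 ≠ 0 := sub_ne_zero.mpr hs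
  rw [show (s - 1/2)⁻¹ * (PhiF f m t s - PhiF f m t (1/2))
      + PhiF f m t (1/2) * (s - 1/2)⁻¹ = (s - 1/2)⁻¹ * PhiF f m t s by ring]
  rw [Gfun, Complex.tan_eq_sin_div_cos, psiC_factor hs]
  rw [show PhiF f m t s = s ^ (-((m:ℤ)+2)) * (Complex.sin ((Real.pi:ℂ)*s) / psiC s) * f s
    * Complex.exp (Complex.log t * (-s)) from rfl]
  field_simp

lemma half_mem_strip {a b : ℝ} (ha : a < 1/2) (hb : 1/2 < b) :
    ((1:ℂ)/2) ∈ {s : ℂ | a < s.re ∧ s.re < b} := by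
  rw [show (1/2:ℂ) = ((1/2:ℝ):ℂ) by norm_num]
  refine ⟨?_, ?_⟩ <;> simp <;> linarith

set_option maxHeartbeats 1000000 in
lemma Gfun_rect {a b : ℝ} {f : ℂ → ℂ} {m : ℕ} {t : ℝ} (ha0 : 0 < a) (hb1 : b < 1)
    (hf : DifferentiableOn ℂ f {s : ℂ | a < s.re ∧ s.re < b})
    {cLo cHi : ℝ} (h1 : a < cLo) (h2 : cLo < 1/2) (h3 : 1/2 < cHi) (h4 : cHi < b)
    {T : ℝ} (hT : 0 < T) :
    ((∫ x : ℝ in cLo..cHi, Gfun f m t ((x:ℂ) + ((-T:ℝ):ℂ) * Complex.I)) -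
      ∫ x : ℝ in cLo..cHi, Gfun f m t ((x:ℂ) + ((T:ℝ):ℂ) * Complex.I)) +
      Complex.I • (∫ y : ℝ in (-T)..T, Gfun f m t ((cHi:ℂ) + (y:ℂ) * Complex.I)) -
      Complex.I • (∫ y : ℝ in (-T)..T, Gfun f m t ((cLo:ℂ) + (y:ℂ) * Complex.I))
      = PhiF f m t (1/2) * (2 * Real.pi * Complex.I) := by
  have hcLoHi : cLo ≤ cHi := by linarith
  set U := {s : ℂ | a < s.re ∧ s.re < b} with hU
  have hUopen : IsOpen U := strip_open a b
  set H := dslope (PhiF f m t) (1/2) with hHdef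
  set r := PhiF f m t (1/2) with hrdef
  have hΦdiff : DifferentiableOn ℂ (PhiF f m t) U := by
    intro s hs
    exact (PhiF_diffAt (lt_trans ha0 hs.1) (lt_trans hs.2 hb1)
      (hf.differentiableAt (hUopen.mem_nhds hs))).differentiableWithinAt
  have hHdiff : DifferentiableOn ℂ H U :=
    (Complex.differentiableOn_dslope (hUopen.mem_nhds
      (half_mem_strip (lt_trans h1 h2) (lt_trans h3 h4)))).mpr hΦdiff
  have hHcont : ContinuousOn H U := hHdiff.continuousOn
  -- rectangle theorem for H
  have hrect := Complex.integral_boundary_rect_eq_zero_of_differentiableOn H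
      ((cLo:ℂ) + ((-T:ℝ):ℂ) * Complex.I) ((cHi:ℂ) + ((T:ℝ):ℂ) * Complex.I)
      (by
        apply hHdiff.mono
        intro s hs
        rw [Complex.mem_reProdIm, line_re, line_re, line_im, line_im,
          Set.uIcc_of_le hcLoHi] at hs
        exact ⟨lt_of_lt_of_le h1 hs.1.1, lt_of_le_of_lt hs.1.2 h4⟩)
  simp only [line_re, line_im] at hrect
  -- decompose each boundary integral
  have hhoriz : ∀ y0 : ℝ, y0 ≠ 0 →
      (∫ x : ℝ in cLo..cHi, Gfun f m t ((x:ℂ) + (y0:ℂ) * Complex.I))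
      = (∫ x : ℝ in cLo..cHi, H ((x:ℂ) + (y0:ℂ) * Complex.I))
        + r * ∫ x : ℝ in cLo..cHi, ((x:ℂ) + (y0:ℂ) * Complex.I - 1/2)⁻¹ := by
    intro y0 hy0
    have hmaps : ∀ x ∈ Set.uIcc cLo cHi, ((x:ℂ) + (y0:ℂ) * Complex.I) ∈ U := by
      intro x hx
      rw [Set.uIcc_of_le hcLoHi] at hx
      refine ⟨?_, ?_⟩ <;> rw [line_re]
      · linarith [hx.1]
      · linarith [hx.2]
    have hint1 : IntervalIntegrable (fun x : ℝ => H ((x:ℂ) + (y0:ℂ) * Complex.I))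
        MeasureTheory.volume cLo cHi := by
      apply ContinuousOn.intervalIntegrable
      exact hHcont.comp (Continuous.continuousOn
        (Complex.continuous_ofReal.add continuous_const)) hmaps
    have hint2 : IntervalIntegrable (fun x : ℝ => r * ((x:ℂ) + (y0:ℂ) * Complex.I - 1/2)⁻¹)
        MeasureTheory.volume cLo cHi := by
      apply Continuous.intervalIntegrable
      apply Continuous.mul continuous_const
      apply Continuous.inv₀
      · exact (Complex.continuous_ofReal.add continuous_const).sub continuous_const
      · intro x h
        have := congrArg Complex.im h
        simp at this
        exact hy0 this
    rw [← intervalIntegral.integral_const_mul, ← intervalIntegral.integral_add hint1 hint2]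
    apply intervalIntegral.integral_congr
    intro x hx
    have hmem := hmaps x hx
    apply Gfun_decomp
    · exact lt_trans ha0 hmem.1
    · exact lt_trans hmem.2 hb1
    · intro h
      have := congrArg Complex.im h
      rw [line_im] at this
      norm_num at this
      exact hy0 this
  have hvert : ∀ c : ℝ, a < c → c < b → c ≠ 1/2 →
      (∫ y : ℝ in (-T)..T, Gfun f m t ((c:ℂ) + (y:ℂ) * Complex.I))
      = (∫ y : ℝ in (-T)..T, H ((c:ℂ) + (y:ℂ) * Complex.I))
        + r * ∫ y : ℝ in (-T)..T, ((c:ℂ) + (y:ℂ) * Complex.I - 1/2)⁻¹ := by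
    intro c hc1 hc2 hc3
    have hmaps : ∀ y ∈ Set.uIcc (-T) T, ((c:ℂ) + (y:ℂ) * Complex.I) ∈ U := by
      intro y _
      exact ⟨by rw [line_re]; exact hc1, by rw [line_re]; exact hc2⟩
    have hint1 : IntervalIntegrable (fun y : ℝ => H ((c:ℂ) + (y:ℂ) * Complex.I))
        MeasureTheory.volume (-T) T := by
      apply ContinuousOn.intervalIntegrable
      exact hHcont.comp (Continuous.continuousOn
        (continuous_const.add (Complex.continuous_ofReal.mul continuous_const))) hmaps
    have hint2 : IntervalIntegrable (fun y : ℝ => r * ((c:ℂ) + (y:ℂ) * Complex.I - 1/2)⁻¹)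
        MeasureTheory.volume (-T) T := by
      apply Continuous.intervalIntegrable
      apply Continuous.mul continuous_const
      apply Continuous.inv₀
      · exact (continuous_const.add (Complex.continuous_ofReal.mul continuous_const)).sub
          continuous_const
      · intro y h
        have := congrArg Complex.re h
        simp at this
        apply hc3
        linarith [this]
    rw [← intervalIntegral.integral_const_mul, ← intervalIntegral.integral_add hint1 hint2]
    apply intervalIntegral.integral_congr
    intro y hy
    apply Gfun_decomp
    · rw [line_re]; linarith
    · rw [line_re]; linarith
    · exact line_ne_half hc3 y
  have hpole := pole_rect cLo cHi T h2 h3 hT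
  rw [hhoriz (-T) (by linarith), hhoriz T (by linarith),
    hvert cHi (lt_trans (lt_trans h1 h2) h3) h4 (by linarith),
    hvert cLo h1 (by linarith) (by linarith)]
  simp only [smul_eq_mul] at hrect hpole ⊢
  linear_combination hrect + r * hpole

lemma PhiF_half (f : ℂ → ℂ) (m : ℕ) {t : ℝ} (ht : 0 < t) :
    PhiF f m t (1/2)
      = -((2 ^ (m + 2) / (Real.pi : ℂ)) * f (1/2) * (t : ℂ) ^ (-(1/2 : ℂ))) := by
  have hπ : (Real.pi : ℂ) ≠ 0 := by exact_mod_cast Real.pi_ne_zero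
  have htne : (t:ℂ) ≠ 0 := by exact_mod_cast ht.ne'
  have hpow : ((1:ℂ)/2) ^ (-((m:ℤ)+2)) = (2:ℂ) ^ (m+2) := by
    rw [one_div, inv_zpow, ← zpow_neg, neg_neg,
      show ((m:ℤ)+2) = ((m+2:ℕ):ℤ) by push_cast; ring, zpow_natCast]
  have hexp : Complex.exp (Complex.log (t:ℂ) * (-(1/2:ℂ))) = (t:ℂ) ^ (-(1/2:ℂ)) :=
    (Complex.cpow_def_of_ne_zero htne _).symm
  show ((1:ℂ)/2) ^ (-((m:ℤ)+2)) * (Complex.sin ((Real.pi:ℂ)*(1/2)) / psiC (1/2))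
      * f (1/2) * Complex.exp (Complex.log (t:ℂ) * (-(1/2:ℂ))) = _
  rw [hpow, sin_pi_half, psiC_val, hexp, one_div, inv_neg]
  ring



theorem vertical_contour_shift
    (α β : ℝ) (hα : 0 < α) (hα2 : α < 1/2) (hβ1 : 1/2 < β) (hβ : β < 1)
    (f : ℂ → ℂ)
    (hf : DifferentiableOn ℂ f {s : ℂ | α < s.re ∧ s.re < β})
    (C : ℝ) (hC : 0 < C) (m : ℕ)
    (hbound : ∀ s : ℂ, α < s.re → s.re < β →
        ‖f s‖ ≤ C * ‖s‖ ^ m)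
    (cLo cHi : ℝ) (h1 : α < cLo) (h2 : cLo < 1/2) (h3 : 1/2 < cHi) (h4 : cHi < β) :
    ∀ t : ℝ, 0 < t →
      verticalRho f m cHi t
        = (2 ^ (m + 2) / (Real.pi : ℂ)) * f (1/2) * (t : ℂ) ^ (-(1/2 : ℂ))
            + verticalRho f m cLo t := by
  intro t ht
  have hC0 : (0:ℝ) ≤ C := hC.le
  set g := Gfun f m t with hg
  set r := PhiF f m t (1/2) with hr
  -- vertical integrability
  have hIntHi : MeasureTheory.Integrable (fun y : ℝ => g ((cHi:ℂ) + (y:ℂ) * Complex.I)) :=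
    Gfun_integrable ht hα hβ hf hC0 hbound (by linarith) h4 (by intro h; rw [h] at h3; linarith)
  have hIntLo : MeasureTheory.Integrable (fun y : ℝ => g ((cLo:ℂ) + (y:ℂ) * Complex.I)) :=
    Gfun_integrable ht hα hβ hf hC0 hbound h1 (by linarith) (by intro h; rw [h] at h2; linarith)
  -- limits of vertical integrals
  have hlimHi : Filter.Tendsto (fun T : ℝ => ∫ y : ℝ in (-T)..T, g ((cHi:ℂ) + (y:ℂ) * Complex.I))
      Filter.atTop (nhds (∫ y : ℝ, g ((cHi:ℂ) + (y:ℂ) * Complex.I))) :=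
    MeasureTheory.intervalIntegral_tendsto_integral hIntHi Filter.tendsto_neg_atTop_atBot
      Filter.tendsto_id
  have hlimLo : Filter.Tendsto (fun T : ℝ => ∫ y : ℝ in (-T)..T, g ((cLo:ℂ) + (y:ℂ) * Complex.I))
      Filter.atTop (nhds (∫ y : ℝ, g ((cLo:ℂ) + (y:ℂ) * Complex.I))) :=
    MeasureTheory.intervalIntegral_tendsto_integral hIntLo Filter.tendsto_neg_atTop_atBot
      Filter.tendsto_id
  -- horizontal integrals tend to zero
  set K : ℝ := 3 * C * (t ^ (-α) + t ^ (-β)) with hK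
  have hhorbound : ∀ y0 T : ℝ, 1 ≤ T → |y0| = T →
      ‖∫ x : ℝ in cLo..cHi, g ((x:ℂ) + (y0:ℂ) * Complex.I)‖ ≤ K / T^2 * |cHi - cLo| := by
    intro y0 T hT habs
    apply intervalIntegral.norm_integral_le_of_norm_le_const
    intro x hx
    rw [Set.uIoc_of_le (by linarith : cLo ≤ cHi)] at hx
    have hbnd := Gfun_bound ht hC0 hbound hα
      (show α < ((x:ℂ) + (y0:ℂ)*Complex.I).re by rw [line_re]; linarith [hx.1])
      (show ((x:ℂ) + (y0:ℂ)*Complex.I).re < β by rw [line_re]; linarith [hx.2])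
      (by rw [line_im, habs]; exact hT)
    rw [line_im] at hbnd
    calc ‖g ((x:ℂ) + (y0:ℂ)*Complex.I)‖ ≤ K / y0^2 := hbnd
      _ = K / T^2 := by rw [← habs, _root_.sq_abs]
  have hKT : Filter.Tendsto (fun T : ℝ => K / T^2 * |cHi - cLo|) Filter.atTop (nhds 0) := by
    have h0 : Filter.Tendsto (fun T : ℝ => T^2) Filter.atTop Filter.atTop :=
      Filter.tendsto_pow_atTop (by norm_num)
    have h1' : Filter.Tendsto (fun T : ℝ => (T^2)⁻¹) Filter.atTop (nhds 0) :=
      h0.inv_tendsto_atTop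
    have := (h1'.const_mul K).mul_const |cHi - cLo|
    simpa [div_eq_mul_inv] using this
  have hhorTop : Filter.Tendsto
      (fun T : ℝ => ∫ x : ℝ in cLo..cHi, g ((x:ℂ) + ((T:ℝ):ℂ) * Complex.I))
      Filter.atTop (nhds 0) := by
    apply squeeze_zero_norm' _ hKT
    filter_upwards [Filter.eventually_ge_atTop 1] with T hT
    exact hhorbound T T hT (abs_of_nonneg (by linarith) : |T| = T)
  have hhorBot : Filter.Tendsto
      (fun T : ℝ => ∫ x : ℝ in cLo..cHi, g ((x:ℂ) + ((-T:ℝ):ℂ) * Complex.I))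
      Filter.atTop (nhds 0) := by
    apply squeeze_zero_norm' _ hKT
    filter_upwards [Filter.eventually_ge_atTop 1] with T hT
    exact hhorbound (-T) T hT (by rw [abs_neg]; exact abs_of_nonneg (by linarith))
  -- the boundary sum and its limit
  set B : ℝ → ℂ := fun T =>
    ((∫ x : ℝ in cLo..cHi, g ((x:ℂ) + ((-T:ℝ):ℂ) * Complex.I)) -
      ∫ x : ℝ in cLo..cHi, g ((x:ℂ) + ((T:ℝ):ℂ) * Complex.I)) +
      Complex.I • (∫ y : ℝ in (-T)..T, g ((cHi:ℂ) + (y:ℂ) * Complex.I)) -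
      Complex.I • (∫ y : ℝ in (-T)..T, g ((cLo:ℂ) + (y:ℂ) * Complex.I)) with hB
  have hBlim : Filter.Tendsto B Filter.atTop
      (nhds ((0 - 0) + Complex.I • (∫ y : ℝ, g ((cHi:ℂ) + (y:ℂ) * Complex.I))
        - Complex.I • (∫ y : ℝ, g ((cLo:ℂ) + (y:ℂ) * Complex.I)))) := by
    exact (((hhorBot.sub hhorTop).add (hlimHi.const_smul Complex.I)).sub
      (hlimLo.const_smul Complex.I))
  have hBconst : ∀ᶠ T in Filter.atTop, B T = r * (2 * Real.pi * Complex.I) := by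
    filter_upwards [Filter.eventually_gt_atTop 0] with T hT
    exact Gfun_rect hα hβ hf h1 h2 h3 h4 hT
  have hBc : B =ᶠ[Filter.atTop] (fun _ => r * (2 * Real.pi * Complex.I)) := hBconst
  have hEq : r * (2 * Real.pi * Complex.I)
      = (0 - 0) + Complex.I • (∫ y : ℝ, g ((cHi:ℂ) + (y:ℂ) * Complex.I))
        - Complex.I • (∫ y : ℝ, g ((cLo:ℂ) + (y:ℂ) * Complex.I)) :=
    tendsto_nhds_unique (Filter.Tendsto.congr' hBc.symm tendsto_const_nhds) hBlim
  -- rewrite verticalRho in terms of g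
  have hρ : ∀ c : ℝ, verticalRho f m c t
      = -(2 * (Real.pi : ℂ) * Complex.I)⁻¹
        * (Complex.I * ∫ y : ℝ, g ((c:ℂ) + (y:ℂ) * Complex.I)) := by
    intro c
    rw [verticalRho]
    congr 2
    apply MeasureTheory.integral_congr_ae
    exact Filter.Eventually.of_forall (fun y => Gfun_eq f m t ht _)
  rw [hρ cHi, hρ cLo]
  have hval : (2 ^ (m + 2) / (Real.pi : ℂ)) * f (1/2) * (t : ℂ) ^ (-(1/2 : ℂ)) = -r := by
    rw [hr, PhiF_half f m ht]; ring
  rw [hval]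
  have hπ : (Real.pi : ℂ) ≠ 0 := by exact_mod_cast Real.pi_ne_zero
  have hA : (2 * (Real.pi : ℂ) * Complex.I) ≠ 0 :=
    mul_ne_zero (mul_ne_zero two_ne_zero hπ) Complex.I_ne_zero
  have hinv : (2 * (Real.pi : ℂ) * Complex.I)⁻¹ * (2 * (Real.pi : ℂ) * Complex.I) = 1 :=
    inv_mul_cancel₀ hA
  simp only [smul_eq_mul] at hEq
  linear_combination ((2 * (Real.pi : ℂ) * Complex.I)⁻¹) * hEq - r * hinv
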